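/- In the winner-bid auction with ties to h and payoff-determinant Nash equilibrium bid p = c_l + 1, for any weakly payoff monotone profile σ^λ in which σ_h^λ has full support, the low-valuation agent's expected payoff of bidding c_l − 1 strictly exceeds that of bidding p, and likewise bidding c_l strictly exceeds bidding p; hence σ_l^λ(c_l − 1) ≥ σ_l^λ(p) and σ_l^λ(c_l) ≥ σ_l^λ(p). Specifically, U(δ_{c_l−1}|σ_h^λ; v_l) − U(δ_p|σ_h^λ; v_l) = 2·Σ_{r<c_l−1} σ_h^λ(r) + σ_h^λ(c_l−1)·0 + σ_h^λ(c_l)·1 > 0. -/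
import Mathlib


open Finset Filter

/-- Payoff to the low-valuation agent in the winner-bid auction when she bids `b`
and the high-valuation agent bids `r` (ties won by the high-valuation agent). -/
noncomputable def UlWB (vl : ℕ) (b r : ℕ) : ℝ := if r < b then (vl : ℝ) - b else (r : ℝ)

/-- Payoff to the high-valuation agent in the winner-bid auction when she bids `b`
and the low-valuation agent bids `r` (ties won by the high-valuation agent). -/
noncomputable def UhWB (vh : ℕ) (b r : ℕ) : ℝ := if r ≤ b then (vh : ℝ) - b else (r : ℝ)

/-- A mixed strategy on the bid set `{0, ..., pbar}`. -/
def IsMixed (pbar : ℕ) (σ : ℕ → ℝ) : Prop :=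
  (∀ b, 0 ≤ σ b) ∧ (∀ b, pbar < b → σ b = 0) ∧ ∑ b ∈ Finset.range (pbar + 1), σ b = 1

/-- Expected payoff for the low-valuation agent of bidding `b` against `σh`. -/
noncomputable def eUl (pbar vl : ℕ) (σh : ℕ → ℝ) (b : ℕ) : ℝ :=
  ∑ r ∈ Finset.range (pbar + 1), σh r * UlWB vl b r

/-- Expected payoff for the high-valuation agent of bidding `b` against `σl`. -/
noncomputable def eUh (pbar vh : ℕ) (σl : ℕ → ℝ) (b : ℕ) : ℝ :=
  ∑ r ∈ Finset.range (pbar + 1), σl r * UhWB vh b r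

/-- Nash equilibrium of the winner-bid auction. -/
def IsNashWB (pbar vl vh : ℕ) (σl σh : ℕ → ℝ) : Prop :=
  IsMixed pbar σl ∧ IsMixed pbar σh ∧
  (∀ b ≤ pbar, 0 < σl b → ∀ b' ≤ pbar, eUl pbar vl σh b' ≤ eUl pbar vl σh b) ∧
  (∀ b ≤ pbar, 0 < σh b → ∀ b' ≤ pbar, eUh pbar vh σl b' ≤ eUh pbar vh σl b)

/-- Expected payoff of the low-valuation agent at a mixed profile. -/
noncomputable def piL (pbar vl : ℕ) (σl σh : ℕ → ℝ) : ℝ :=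
  ∑ b ∈ Finset.range (pbar + 1), σl b * eUl pbar vl σh b

/-- Expected payoff of the high-valuation agent at a mixed profile. -/
noncomputable def piH (pbar vh : ℕ) (σl σh : ℕ → ℝ) : ℝ :=
  ∑ b ∈ Finset.range (pbar + 1), σh b * eUh pbar vh σl b

/-- Weak payoff monotonicity for the low-valuation agent. -/
def WPMl (pbar vl : ℕ) (σl σh : ℕ → ℝ) : Prop :=
  ∀ a ≤ pbar, ∀ b ≤ pbar, σl b < σl a → eUl pbar vl σh b < eUl pbar vl σh a

/-- Weak payoff monotonicity for the high-valuation agent. -/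
def WPMh (pbar vh : ℕ) (σl σh : ℕ → ℝ) : Prop :=
  ∀ a ≤ pbar, ∀ b ≤ pbar, σh b < σh a → eUh pbar vh σl b < eUh pbar vh σl a

/-- Expected bid under a mixed strategy. -/
noncomputable def Ebid (pbar : ℕ) (σ : ℕ → ℝ) : ℝ :=
  ∑ b ∈ Finset.range (pbar + 1), σ b * b

/-- With payoff-determinant bid `p = cl + 1`, for any weakly payoff monotone profile in which
`σh` has full support, the low-valuation agent's expected payoff of bidding `cl - 1`
(respectively `cl`) strictly exceeds that of bidding `p`; hence
`σl (cl - 1) ≥ σl p` and `σl cl ≥ σl p`; moreover the stated payoff-difference identity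
`eUl (cl-1) - eUl p = 2·Σ_{r<cl-1} σh r + σh (cl-1)·0 + σh cl·1` holds. -/
theorem stmt19 (pbar vl vh cl ch : ℕ) (hvl : vl = 2 * cl) (hvh : vh = 2 * ch)
    (hcl : 0 < cl) (hclch : cl < ch) (hpbar : ch ≤ pbar)
    (σl σh : ℕ → ℝ) (hmixl : IsMixed pbar σl) (hmixh : IsMixed pbar σh)
    (hwpml : WPMl pbar vl σl σh) (hwpmh : WPMh pbar vh σl σh)
    (hfull : ∀ r ≤ pbar, 0 < σh r) :
    (eUl pbar vl σh (cl - 1) - eUl pbar vl σh (cl + 1) =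
      2 * (∑ r ∈ Finset.range (cl - 1), σh r) + σh (cl - 1) * 0 + σh cl * 1) ∧
    eUl pbar vl σh (cl + 1) < eUl pbar vl σh (cl - 1) ∧
    eUl pbar vl σh (cl + 1) < eUl pbar vl σh cl ∧
    σl (cl + 1) ≤ σl (cl - 1) ∧
    σl (cl + 1) ≤ σl cl := by

  have hclp : cl + 1 ≤ pbar := by omega
  have hcast : ((cl - 1 : ℕ) : ℝ) = (cl : ℝ) - 1 := by
    rw [Nat.cast_sub hcl]; norm_num
  -- first identity
  have key1 : eUl pbar vl σh (cl - 1) - eUl pbar vl σh (cl + 1) =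
      2 * (∑ r ∈ Finset.range (cl - 1), σh r) + σh cl := by
    unfold eUl
    rw [← Finset.sum_sub_distrib]
    have hpt : ∀ r ∈ Finset.range (pbar + 1),
        σh r * UlWB vl (cl - 1) r - σh r * UlWB vl (cl + 1) r =
          (if r < cl - 1 then 2 * σh r else 0) + (if r = cl then σh r else 0) := by
      intro r hr
      simp only [UlWB]
      split_ifs with h1 h2 h3 h2 h3 h3 h3
      · omega
      · rw [hcast]; push_cast; ring
      · omega
      · omega
      · subst h3; subst hvl; push_cast; ring
      · have : r = cl - 1 := by omega
        subst this; rw [hcast]; subst hvl; push_cast; ring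
      · omega
      · ring
    rw [Finset.sum_congr rfl hpt, Finset.sum_add_distrib]
    have e1 : ∑ r ∈ Finset.range (pbar + 1), (if r < cl - 1 then 2 * σh r else 0)
        = ∑ r ∈ Finset.range (cl - 1), 2 * σh r := by
      rw [← Finset.sum_subset (Finset.range_subset_range.2 (show cl - 1 ≤ pbar + 1 by omega))]
      · exact Finset.sum_congr rfl fun x hx => if_pos (Finset.mem_range.1 hx)
      · intro x _ hx
        exact if_neg (by simpa using hx)
    have e2 : ∑ r ∈ Finset.range (pbar + 1), (if r = cl then σh r else 0) = σh cl := by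
      rw [Finset.sum_ite_eq' (Finset.range (pbar + 1)) cl σh,
        if_pos (Finset.mem_range.2 (by omega))]
    rw [e1, e2, Finset.mul_sum]
  have S1nonneg : 0 ≤ ∑ r ∈ Finset.range (cl - 1), σh r :=
    Finset.sum_nonneg fun r _ => hmixh.1 r
  have hσcl : 0 < σh cl := hfull cl (by omega)
  have ineq1 : eUl pbar vl σh (cl + 1) < eUl pbar vl σh (cl - 1) := by linarith
  -- second identity
  have key2 : eUl pbar vl σh cl - eUl pbar vl σh (cl + 1) =
      ∑ r ∈ Finset.range (cl + 1), σh r := by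
    unfold eUl
    rw [← Finset.sum_sub_distrib]
    have hpt : ∀ r ∈ Finset.range (pbar + 1),
        σh r * UlWB vl cl r - σh r * UlWB vl (cl + 1) r =
          (if r < cl + 1 then σh r else 0) := by
      intro r hr
      simp only [UlWB]
      split_ifs with h1 h2 h2
      · subst hvl; push_cast; ring
      · omega
      · have : r = cl := by omega
        subst this; subst hvl; push_cast; ring
      · ring
    rw [Finset.sum_congr rfl hpt]
    rw [← Finset.sum_subset (Finset.range_subset_range.2 (show cl + 1 ≤ pbar + 1 by omega))]
    · exact Finset.sum_congr rfl fun x hx => if_pos (Finset.mem_range.1 hx)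
    · intro x _ hx
      exact if_neg (by simpa using hx)
  have S2pos : 0 < ∑ r ∈ Finset.range (cl + 1), σh r :=
    Finset.sum_pos (fun r hr => hfull r (by simp at hr; omega)) ⟨0, by simp⟩
  have ineq2 : eUl pbar vl σh (cl + 1) < eUl pbar vl σh cl := by linarith
  refine ⟨by rw [key1]; ring, ineq1, ineq2, ?_, ?_⟩
  · by_contra h
    push_neg at h
    exact absurd (hwpml (cl + 1) (by omega) (cl - 1) (by omega) h) (by linarith)
  · by_contra h
    push_neg at h
    exact absurd (hwpml (cl + 1) (by omega) cl (by omega) h) (by linarith)
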